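/- For any S ∈ R^{m×n} and PSD matrix L ∈ S₊^m, the hyperbolic smoothing Ψ̃^H(S; L) = tr(√(S S^T + L L^T)) equals the nuclear norm of the augmented matrix [S L] ∈ R^{m×(n+m)}, i.e., Ψ̃^H(S; L) = ||[S L]||_*. In particular Ψ̃^H(S; 0) = ||S||_* and Ψ̃^H(S; L) ≥ ||S||_*. -/

import Mathlib

open Matrix Finset
open scoped Classical

noncomputable def psqrt {m : ℕ} (A : Matrix (Fin m) (Fin m) ℝ) : Matrix (Fin m) (Fin m) ℝ :=
  if h : A.PosSemidef then
    (h.1.eigenvectorUnitary : Matrix (Fin m) (Fin m) ℝ) * diagonal (Real.sqrt ∘ h.1.eigenvalues) *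
      (star h.1.eigenvectorUnitary : Matrix (Fin m) (Fin m) ℝ) else 0

noncomputable def nuclearNorm {m : ℕ} {n : Type*} [Fintype n]
    (A : Matrix (Fin m) n ℝ) : ℝ :=
  (psqrt (A * Aᵀ)).trace

/-- The hyperbolic smoothing `Ψ̃^H(S; L) = tr(√(S Sᵀ + L Lᵀ))`. -/
noncomputable def psiH {m n : ℕ} (S : Matrix (Fin m) (Fin n) ℝ)
    (L : Matrix (Fin m) (Fin m) ℝ) : ℝ :=
  (psqrt (S * Sᵀ + L * Lᵀ)).trace

/- Auxiliary lemmas -/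

noncomputable def Matrix.PosSemidef.sqrt {m : ℕ} {A : Matrix (Fin m) (Fin m) ℝ}
    (h : A.PosSemidef) : Matrix (Fin m) (Fin m) ℝ :=
  (h.1.eigenvectorUnitary : Matrix (Fin m) (Fin m) ℝ) * diagonal (Real.sqrt ∘ h.1.eigenvalues) *
    (star h.1.eigenvectorUnitary : Matrix (Fin m) (Fin m) ℝ)

lemma Matrix.PosSemidef.posSemidef_sqrt {m : ℕ} {A : Matrix (Fin m) (Fin m) ℝ}
    (h : A.PosSemidef) : h.sqrt.PosSemidef := by
  have hd : (diagonal (Real.sqrt ∘ h.1.eigenvalues)).PosSemidef :=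
    posSemidef_diagonal_iff.mpr fun i => Real.sqrt_nonneg _
  have := hd.mul_mul_conjTranspose_same (h.1.eigenvectorUnitary : Matrix (Fin m) (Fin m) ℝ)
  unfold Matrix.PosSemidef.sqrt
  simpa [Matrix.star_eq_conjTranspose] using this

lemma Matrix.PosSemidef.sqrt_mul_self {m : ℕ} {A : Matrix (Fin m) (Fin m) ℝ}
    (h : A.PosSemidef) : h.sqrt * h.sqrt = A := by
  have hU : (star h.1.eigenvectorUnitary : Matrix (Fin m) (Fin m) ℝ) *
      (h.1.eigenvectorUnitary : Matrix (Fin m) (Fin m) ℝ) = 1 := Unitary.coe_star_mul_self _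
  have hD : diagonal (Real.sqrt ∘ h.1.eigenvalues) * diagonal (Real.sqrt ∘ h.1.eigenvalues)
      = diagonal h.1.eigenvalues := by
    rw [diagonal_mul_diagonal]
    congr 1; funext i
    exact Real.mul_self_sqrt (h.eigenvalues_nonneg i)
  unfold Matrix.PosSemidef.sqrt
  conv_rhs => rw [h.1.spectral_theorem, Unitary.conjStarAlgAut_apply]
  simp only [Matrix.mul_assoc]
  rw [← Matrix.mul_assoc (star _ : Matrix (Fin m) (Fin m) ℝ) _ (diagonal _ * _), hU,
    Matrix.one_mul, ← Matrix.mul_assoc (diagonal _) (diagonal _), hD]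
  rfl

lemma psd_mul_transpose_self {m k : ℕ} (A : Matrix (Fin m) (Fin k) ℝ) :
    (A * Aᵀ).PosSemidef := by
  have := Matrix.posSemidef_self_mul_conjTranspose A
  rwa [Matrix.conjTranspose_eq_transpose_of_trivial] at this

lemma trace_nonneg_of_psd {m : ℕ} {M : Matrix (Fin m) (Fin m) ℝ} (h : M.PosSemidef) :
    0 ≤ M.trace := by
  rw [Matrix.trace]
  refine Finset.sum_nonneg fun i _ => ?_
  have := h.dotProduct_mulVec_nonneg (Pi.single i 1)
  simpa [dotProduct, Matrix.mulVec, Pi.single_apply, Finset.mul_sum] using this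

lemma herm_dot {m : ℕ} {M : Matrix (Fin m) (Fin m) ℝ} (hM : M.IsHermitian)
    (v w : Fin m → ℝ) : v ⬝ᵥ (M *ᵥ w) = (M *ᵥ v) ⬝ᵥ w := by
  have hMt : Mᵀ = M := by
    rw [← Matrix.conjTranspose_eq_transpose_of_trivial]; exact hM
  rw [Matrix.dotProduct_mulVec, ← Matrix.mulVec_transpose, hMt]

lemma sqrt_sub_psd {m : ℕ} {A B : Matrix (Fin m) (Fin m) ℝ}
    (hA : A.PosSemidef) (hB : B.PosSemidef) (hAB : (B - A).PosSemidef) :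
    (hB.sqrt - hA.sqrt).PosSemidef := by
  have hX := hA.posSemidef_sqrt
  have hY := hB.posSemidef_sqrt
  set X := hA.sqrt
  set Y := hB.sqrt
  have hD : (Y - X).IsHermitian := hY.1.sub hX.1
  rw [hD.posSemidef_iff_eigenvalues_nonneg]
  intro i
  change 0 ≤ hD.eigenvalues i
  set μ := hD.eigenvalues i with hμ
  set v : Fin m → ℝ := ⇑(hD.eigenvectorBasis i) with hvdef
  have hv : (Y - X) *ᵥ v = μ • v := hD.mulVec_eigenvectorBasis i
  have hvne : v ≠ 0 := by
    intro h
    exact hD.eigenvectorBasis.orthonormal.ne_zero i (by ext j; exact congrFun h j)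
  have hc0 : 0 < v ⬝ᵥ v := by
    have hnn : 0 ≤ v ⬝ᵥ v := Finset.sum_nonneg fun j _ => mul_self_nonneg _
    rcases lt_or_eq_of_le hnn with h | h
    · exact h
    · exact absurd (dotProduct_self_eq_zero.mp h.symm) hvne
  have hXv : X *ᵥ v = Y *ᵥ v - μ • v := by
    rw [Matrix.sub_mulVec] at hv
    rw [← hv]; abel
  have ha : 0 ≤ v ⬝ᵥ (Y *ᵥ v) := by
    have := hY.dotProduct_mulVec_nonneg v; simpa using this
  have hq : v ⬝ᵥ (A *ᵥ v) ≤ v ⬝ᵥ (B *ᵥ v) := by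
    have := hAB.dotProduct_mulVec_nonneg v
    simp only [Matrix.sub_mulVec, dotProduct_sub, star_trivial] at this
    linarith
  have hqA : v ⬝ᵥ (A *ᵥ v) = (X *ᵥ v) ⬝ᵥ (X *ᵥ v) := by
    rw [← hA.sqrt_mul_self, ← Matrix.mulVec_mulVec, herm_dot hX.1]
  have hqB : v ⬝ᵥ (B *ᵥ v) = (Y *ᵥ v) ⬝ᵥ (Y *ᵥ v) := by
    rw [← hB.sqrt_mul_self, ← Matrix.mulVec_mulVec, herm_dot hY.1]
  have hexp : (X *ᵥ v) ⬝ᵥ (X *ᵥ v)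
      = (Y *ᵥ v) ⬝ᵥ (Y *ᵥ v) - 2 * μ * (v ⬝ᵥ (Y *ᵥ v)) + μ ^ 2 * (v ⬝ᵥ v) := by
    rw [hXv]
    simp only [dotProduct_sub, sub_dotProduct, smul_dotProduct,
      dotProduct_smul, smul_eq_mul]
    rw [dotProduct_comm (Y *ᵥ v) v]
    ring
  have hkey : μ ^ 2 * (v ⬝ᵥ v) ≤ 2 * μ * (v ⬝ᵥ (Y *ᵥ v)) := by
    rw [hqA, hqB, hexp] at hq; linarith
  by_contra hneg
  push_neg at hneg
  have h1 : 2 * μ * (v ⬝ᵥ (Y *ᵥ v)) ≤ 0 :=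
    mul_nonpos_of_nonpos_of_nonneg (by linarith) ha
  have hμ2 : 0 < μ * μ := mul_pos_of_neg_of_neg hneg hneg
  have h2 : 0 < μ * μ * (v ⬝ᵥ v) := mul_pos hμ2 hc0
  have h3 : μ ^ 2 * (v ⬝ᵥ v) = μ * μ * (v ⬝ᵥ v) := by ring
  linarith

lemma trace_sqrt_mono {m : ℕ} {A B : Matrix (Fin m) (Fin m) ℝ}
    (hA : A.PosSemidef) (hB : B.PosSemidef) (hAB : (B - A).PosSemidef) :
    hA.sqrt.trace ≤ hB.sqrt.trace := by
  have := trace_nonneg_of_psd (sqrt_sub_psd hA hB hAB)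
  rw [Matrix.trace_sub] at this
  linarith

/-- the hyperbolic smoothing equals the nuclear norm of the
augmented matrix `[S L]`, i.e. `Ψ̃^H(S; L) = ‖[S L]‖_*`; in particular
`Ψ̃^H(S; 0) = ‖S‖_*` and `Ψ̃^H(S; L) ≥ ‖S‖_*` for PSD `L`. -/
theorem stmt10 {m n : ℕ} (S : Matrix (Fin m) (Fin n) ℝ)
    (L : Matrix (Fin m) (Fin m) ℝ) (hL : L.PosSemidef) :
    psiH S L = nuclearNorm (Matrix.fromCols S L) ∧
    psiH S 0 = nuclearNorm S ∧
    nuclearNorm S ≤ psiH S L := by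
  have hSS : (S * Sᵀ).PosSemidef := psd_mul_transpose_self S
  have hLL : (L * Lᵀ).PosSemidef := psd_mul_transpose_self L
  have hsum : (S * Sᵀ + L * Lᵀ).PosSemidef := hSS.add hLL
  have haug : Matrix.fromCols S L * (Matrix.fromCols S L)ᵀ = S * Sᵀ + L * Lᵀ := by
    rw [Matrix.transpose_fromCols, Matrix.fromCols_mul_fromRows]
  refine ⟨?_, ?_, ?_⟩
  · unfold psiH nuclearNorm
    rw [haug]
  · unfold psiH nuclearNorm
    simp
  · unfold psiH nuclearNorm
    rw [psqrt, psqrt, dif_pos hSS, dif_pos hsum]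
    exact trace_sqrt_mono hSS hsum (by simpa using hLL)
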